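/- arXiv:0811.1888 — 2 statements merged into one kernel-verified Lean document; each statement's English description precedes it below -/
import Mathlib

section
/- Let f(t) = (1/6)|t|^{−2/3} · 1_{[−1,1]∖{0}}(t) and let X, X', Y be independent real-valued random variables each with density f. Consider the kernel h(x,y) = 1_{x≥0} + 1_{y≥0}. Then for every ε ∈ (0,2]: E[|h(X,Y) − h(X',Y)| · 1_{|X−X'|≤ε}] ≥ P[X ∈ [0, ε/2]] · P[X' ∈ [−ε/2, 0)] = 4^{−4/3} ε^{2/3}. Consequently, for an i.i.d. sequence (X_n) with marginal density f, the kernel h is not 𝒫-Lipschitz-continuous. -/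
open MeasureTheory ProbabilityTheory Filter Asymptotics Real Topology

noncomputable section

variable {Ω : Type*} [MeasurableSpace Ω]

/-- Strict stationarity of the (1-based) sequence `X₁, X₂, …`. -/
def IsStrictlyStationary (P : Measure Ω) (X : ℕ → Ω → ℝ) : Prop :=
  ∀ k : ℕ,
    P.map (fun ω => fun i : ℕ => X (i + 1 + k) ω) =
      P.map (fun ω => fun i : ℕ => X (i + 1) ω)

/-- Law of `X₁`. -/
def margLaw (P : Measure Ω) (X : ℕ → Ω → ℝ) : Measure ℝ := P.map (X 1)

/-- `θ = ∬ h dF dF`. -/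
def thetaU (P : Measure Ω) (X : ℕ → Ω → ℝ) (h : ℝ → ℝ → ℝ) : ℝ :=
  ∫ x, (∫ y, h x y ∂(margLaw P X)) ∂(margLaw P X)

/-- `h₁` of the Hoeffding decomposition. -/
def hOne (P : Measure Ω) (X : ℕ → Ω → ℝ) (h : ℝ → ℝ → ℝ) (x : ℝ) : ℝ :=
  (∫ y, h x y ∂(margLaw P X)) - thetaU P X h

/-- `h₂` of the Hoeffding decomposition. -/
def hTwo (P : Measure Ω) (X : ℕ → Ω → ℝ) (h : ℝ → ℝ → ℝ) (x y : ℝ) : ℝ :=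
  h x y - hOne P X h x - hOne P X h y - thetaU P X h

/-- Moment condition `(M_p)`. -/
def MomentCond (P : Measure Ω) (X : ℕ → Ω → ℝ) (h : ℝ → ℝ → ℝ) (p M : ℝ) : Prop :=
  (∫ x, (∫ y, |h x y| ^ p ∂(margLaw P X)) ∂(margLaw P X)) ≤ M ∧
    ∀ k : ℕ, (∫ ω, |h (X 1 ω) (X (1 + k) ω)| ^ p ∂P) ≤ M

/-- The bivariate U-statistic `U_n(h)`. -/
def Ustat (X : ℕ → Ω → ℝ) (h : ℝ → ℝ → ℝ) (n : ℕ) (ω : Ω) : ℝ :=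
  (2 / ((n : ℝ) * ((n : ℝ) - 1))) *
    ∑ i ∈ Finset.range n, ∑ j ∈ Finset.range n,
      if i < j then h (X (i + 1) ω) (X (j + 1) ω) else 0

/-- σ-algebra generated by `X₁, …, X_k`. -/
def pastSigma (X : ℕ → Ω → ℝ) (k : ℕ) : MeasurableSpace Ω :=
  MeasurableSpace.comap (fun ω => fun i : Fin k => X (i.1 + 1) ω) inferInstance

/-- σ-algebra generated by `(X_j)_{j ≥ k+m}`. -/
def futSigma (X : ℕ → Ω → ℝ) (k m : ℕ) : MeasurableSpace Ω :=
  MeasurableSpace.comap (fun ω => fun j : ℕ => X (k + m + j) ω) inferInstance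

/-- Absolute regularity (β-mixing) coefficient of the sequence. -/
def betaMix (P : Measure Ω) (X : ℕ → Ω → ℝ) (m : ℕ) : ℝ :=
  ⨆ k : ℕ,
    ∫ ω,
      (⨆ A : {A : Set Ω // MeasurableSet[pastSigma X k] A},
        |(P[Set.indicator A.1 (fun _ => (1 : ℝ))|futSigma X k m]) ω - (P A.1).toReal|) ∂P

/-- Strong mixing (α-mixing) coefficient of the sequence. -/
def alphaMix (P : Measure Ω) (X : ℕ → Ω → ℝ) (m : ℕ) : ℝ :=
  ⨆ k : ℕ,
    sSup {r : ℝ | ∃ A B : Set Ω, MeasurableSet[pastSigma X k] A ∧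
      MeasurableSet[futSigma X k m] B ∧
      r = |(P (A ∩ B)).toReal - (P A).toReal * (P B).toReal|}

/-- The admissible joint laws in the definition of 𝒫-Lipschitz continuity: the law of
`(X₁, X_{1+k})` for some `k ∈ ℕ`, `k ≥ 1`, or the product law `P_{X₁} × P_{X₁}`. -/
def AdmissiblePairLaw (P : Measure Ω) (X : ℕ → Ω → ℝ) (ν : Measure (ℝ × ℝ)) : Prop :=
  (∃ k : ℕ, 1 ≤ k ∧ ν = P.map (fun ω => (X 1 ω, X (1 + k) ω))) ∨
    ν = (margLaw P X).prod (margLaw P X)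

/-- `𝒫`-Lipschitz continuity of a kernel `h` with constant `L`. -/
def PLipschitzWith (P : Measure Ω) (X : ℕ → Ω → ℝ) (h : ℝ → ℝ → ℝ) (L : ℝ) : Prop :=
  ∀ (Ω' : Type) [MeasurableSpace Ω'], ∀ (P' : Measure Ω') (A A' B : Ω' → ℝ),
    IsProbabilityMeasure P' →
    AdmissiblePairLaw P X (P'.map fun ω' => (A ω', B ω')) →
    AdmissiblePairLaw P X (P'.map fun ω' => (A' ω', B ω')) →
    ∀ ε : ℝ, 0 < ε →
      (∫ ω', Set.indicator {ω'' | |A ω'' - A' ω''| ≤ ε}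
          (fun ω'' => |h (A ω'') (B ω'') - h (A' ω'') (B ω'')|) ω' ∂P') ≤ L * ε

/-- The circular block bootstrap sample `X*_i` (for `1 ≤ i ≤ bl`, with `b = ⌊n/l⌋`),
given the choice `j` of the (0-based) starting indices of the `b` blocks. -/
def bootSample (X : ℕ → Ω → ℝ) (n l : ℕ) (j : Fin (n / l) → Fin n) (ω : Ω) (i : ℕ) : ℝ :=
  if hb : 0 < n / l then
    X ((((j ⟨((i - 1) / l) % (n / l), Nat.mod_lt _ hb⟩).1 + (i - 1) % l) % n) + 1) ω
  else 0

/-- Bootstrapped U-statistic `U*_n(h)` for a given choice of blocks `j`. -/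
def UstatBoot (X : ℕ → Ω → ℝ) (h : ℝ → ℝ → ℝ) (n l : ℕ)
    (j : Fin (n / l) → Fin n) (ω : Ω) : ℝ :=
  (2 / (((n / l * l : ℕ) : ℝ) * (((n / l * l : ℕ) : ℝ) - 1))) *
    ∑ i ∈ Finset.range (n / l * l), ∑ i' ∈ Finset.range (n / l * l),
      if i < i' then h (bootSample X n l j ω (i + 1)) (bootSample X n l j ω (i' + 1)) else 0

/-- The bootstrap (conditional) expectation `E*`: the `b = ⌊n/l⌋` blocks are chosen
independently and uniformly among the `n` cyclic blocks. -/
def Estar (n l : ℕ) (g : (Fin (n / l) → Fin n) → ℝ) : ℝ :=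
  (∑ j : Fin (n / l) → Fin n, g j) / (n : ℝ) ^ (n / l)

/-- The bootstrap (conditional) variance `Var*`. -/
def VarStar (n l : ℕ) (g : (Fin (n / l) → Fin n) → ℝ) : ℝ :=
  Estar n l (fun j => g j ^ 2) - Estar n l g ^ 2

/-- The bootstrap (conditional) probability `P*`. -/
def Pstar (n l : ℕ) (q : (Fin (n / l) → Fin n) → Prop) : ℝ :=
  Estar n l (Set.indicator {j | q j} fun _ => (1 : ℝ))

/-- The covariance `Cov(h₁(X₁), h₁(X_{1+k}))`. -/
def hCov (P : Measure Ω) (X : ℕ → Ω → ℝ) (h : ℝ → ℝ → ℝ) (k : ℕ) : ℝ :=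
  (∫ ω, hOne P X h (X 1 ω) * hOne P X h (X (1 + k) ω) ∂P) -
    (∫ ω, hOne P X h (X 1 ω) ∂P) * (∫ ω, hOne P X h (X (1 + k) ω) ∂P)

/-- The long-run variance `σ∞² = Var[h₁(X₁)] + 2 ∑_{k≥1} Cov(h₁(X₁), h₁(X_{1+k}))`. -/
def sigmaInfSq (P : Measure Ω) (X : ℕ → Ω → ℝ) (h : ℝ → ℝ → ℝ) : ℝ :=
  variance (fun ω => hOne P X h (X 1 ω)) P + 2 * ∑' k : ℕ, hCov P X h (k + 1)

end

/-- The density `f(t) = (1/6)|t|^{-2/3} 1_{[-1,1] \\ {0}}(t)`. -/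
noncomputable def cuspDensity : ℝ → ℝ :=
  Set.indicator (Set.Icc (-1 : ℝ) 1 \ {0}) fun t => (1 / 6) * |t| ^ (-(2 : ℝ) / 3)

/-- The law with density `cuspDensity` with respect to Lebesgue measure. -/
noncomputable def cuspLaw : Measure ℝ :=
  MeasureTheory.volume.withDensity fun t => ENNReal.ofReal (cuspDensity t)

/-- The discontinuous kernel `h(x,y) = 1_{x ≥ 0} + 1_{y ≥ 0}`. -/
noncomputable def jumpKernel : ℝ → ℝ → ℝ :=
  fun x y => (if 0 ≤ x then (1 : ℝ) else 0) + (if 0 ≤ y then (1 : ℝ) else 0)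

section Aux

open Set

lemma cusp_integrable {a : ℝ} (h0 : 0 < a) :
    MeasureTheory.IntegrableOn (fun t : ℝ => (1 / 6) * t ^ (-(2 : ℝ) / 3)) (Set.Ioc 0 a) := by
  have h : IntervalIntegrable (fun t : ℝ => (1 / 6) * t ^ (-(2 : ℝ) / 3))
      MeasureTheory.volume 0 a :=
    (intervalIntegral.intervalIntegrable_rpow' (by norm_num)).const_mul _
  exact (intervalIntegrable_iff_integrableOn_Ioc_of_le h0.le).mp h

lemma cusp_integral {a : ℝ} (h0 : 0 < a) :
    ∫ t in Set.Ioc 0 a, (1 / 6) * t ^ (-(2 : ℝ) / 3) = 2⁻¹ * a ^ ((1 : ℝ) / 3) := by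
  rw [← intervalIntegral.integral_of_le h0.le, intervalIntegral.integral_const_mul,
    integral_rpow (Or.inl (by norm_num)),
    show (-(2 : ℝ) / 3 + 1) = 1 / 3 by norm_num, Real.zero_rpow (by norm_num)]
  ring

lemma cuspLaw_Icc {a : ℝ} (h0 : 0 < a) (h1 : a ≤ 1) :
    (cuspLaw (Set.Icc 0 a)).toReal = 2⁻¹ * a ^ ((1 : ℝ) / 3) := by
  have hnn : 0 ≤ 2⁻¹ * a ^ ((1 : ℝ) / 3) :=
    mul_nonneg (by norm_num) (Real.rpow_nonneg h0.le _)
  have : cuspLaw (Set.Icc 0 a) = ENNReal.ofReal (2⁻¹ * a ^ ((1 : ℝ) / 3)) := by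
    rw [cuspLaw, withDensity_apply _ measurableSet_Icc,
      ← setLIntegral_congr (Ioc_ae_eq_Icc (α := ℝ) (a := 0) (b := a))]
    have heq : ∀ t ∈ Set.Ioc (0 : ℝ) a,
        ENNReal.ofReal (cuspDensity t) = ENNReal.ofReal ((1 / 6) * t ^ (-(2 : ℝ) / 3)) := by
      intro t ht
      have ht0 : 0 < t := ht.1
      have hmem : t ∈ Set.Icc (-1 : ℝ) 1 \ ({0} : Set ℝ) :=
        ⟨⟨by linarith, le_trans ht.2 h1⟩, by simp [ht0.ne']⟩
      rw [cuspDensity, Set.indicator_of_mem hmem, abs_of_pos ht0]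
    rw [setLIntegral_congr_fun measurableSet_Ioc heq,
      ← MeasureTheory.ofReal_integral_eq_lintegral_ofReal (cusp_integrable h0)
        (MeasureTheory.ae_restrict_of_forall_mem measurableSet_Ioc fun t ht =>
          mul_nonneg (by norm_num) (Real.rpow_nonneg ht.1.le _)),
      cusp_integral h0]
  rw [this, ENNReal.toReal_ofReal hnn]

lemma cuspLaw_Ico {a : ℝ} (h0 : 0 < a) (h1 : a ≤ 1) :
    (cuspLaw (Set.Ico (-a) 0)).toReal = 2⁻¹ * a ^ ((1 : ℝ) / 3) := by
  have hnn : 0 ≤ 2⁻¹ * a ^ ((1 : ℝ) / 3) :=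
    mul_nonneg (by norm_num) (Real.rpow_nonneg h0.le _)
  have hint : MeasureTheory.IntegrableOn
      (fun t : ℝ => (1 / 6) * (-t) ^ (-(2 : ℝ) / 3)) (Set.Ioc (-a) 0) := by
    have h : IntervalIntegrable (fun t : ℝ => (1 / 6) * (-t) ^ (-(2 : ℝ) / 3))
        MeasureTheory.volume (-a) 0 := by
      have := (IntervalIntegrable.iff_comp_neg
        (f := fun t : ℝ => (1 / 6) * t ^ (-(2 : ℝ) / 3)) (a := 0) (b := a)).mp
        ((intervalIntegral.intervalIntegrable_rpow' (by norm_num)).const_mul _)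
      simpa using this.symm
    exact (intervalIntegrable_iff_integrableOn_Ioc_of_le (by linarith)).mp h
  have hval : ∫ t in Set.Ioc (-a) 0, (1 / 6) * (-t) ^ (-(2 : ℝ) / 3)
      = 2⁻¹ * a ^ ((1 : ℝ) / 3) := by
    rw [← intervalIntegral.integral_of_le (by linarith : -a ≤ (0 : ℝ))]
    have := intervalIntegral.integral_comp_neg
      (f := fun t : ℝ => (1 / 6) * t ^ (-(2 : ℝ) / 3)) (a := -a) (b := 0)
    simp only [neg_zero, neg_neg] at this
    rw [this, intervalIntegral.integral_of_le h0.le, cusp_integral h0]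
  have : cuspLaw (Set.Ico (-a) 0) = ENNReal.ofReal (2⁻¹ * a ^ ((1 : ℝ) / 3)) := by
    rw [cuspLaw, withDensity_apply _ measurableSet_Ico,
      setLIntegral_congr (Ico_ae_eq_Ioc (α := ℝ) (a := -a) (b := 0))]
    have heq : ∀ t ∈ Set.Ioc (-a) (0 : ℝ),
        ENNReal.ofReal (cuspDensity t) = ENNReal.ofReal ((1 / 6) * (-t) ^ (-(2 : ℝ) / 3)) := by
      intro t ht
      rcases eq_or_lt_of_le ht.2 with h | ht0
      · subst h; simp [cuspDensity]
      · have hmem : t ∈ Set.Icc (-1 : ℝ) 1 \ ({0} : Set ℝ) :=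
          ⟨⟨by linarith [ht.1], by linarith⟩, by simp [ht0.ne]⟩
        rw [cuspDensity, Set.indicator_of_mem hmem, abs_of_neg ht0]
    rw [setLIntegral_congr_fun measurableSet_Ioc heq,
      ← MeasureTheory.ofReal_integral_eq_lintegral_ofReal hint
        (MeasureTheory.ae_restrict_of_forall_mem measurableSet_Ioc fun t ht =>
          mul_nonneg (by norm_num) (Real.rpow_nonneg (by linarith [ht.2] : (0:ℝ) ≤ -t) _)),
      hval]
  rw [this, ENNReal.toReal_ofReal hnn]

lemma cusp_product_val {ε : ℝ} (hε : 0 < ε) :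
    (2⁻¹ * (ε / 2) ^ ((1 : ℝ) / 3)) * (2⁻¹ * (ε / 2) ^ ((1 : ℝ) / 3)) =
      (4 : ℝ) ^ (-(4 : ℝ) / 3) * ε ^ ((2 : ℝ) / 3) := by
  have hε2 : (0 : ℝ) < ε / 2 := by linarith
  have h13 : (ε / 2) ^ ((1 : ℝ) / 3) * (ε / 2) ^ ((1 : ℝ) / 3) = (ε / 2) ^ ((2 : ℝ) / 3) := by
    rw [← Real.rpow_add hε2]; norm_num
  have hdiv : (ε / 2) ^ ((2 : ℝ) / 3) = ε ^ ((2 : ℝ) / 3) / 2 ^ ((2 : ℝ) / 3) :=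
    Real.div_rpow hε.le (by norm_num) _
  have h4 : (4 : ℝ) = 2 ^ (2 : ℝ) := by
    rw [show (2 : ℝ) = ((2 : ℕ) : ℝ) by norm_num, Real.rpow_natCast]; norm_num
  have hkey : (4 : ℝ) ^ (-(4 : ℝ) / 3) * 2 ^ ((2 : ℝ) / 3) = 4⁻¹ := by
    rw [h4, ← Real.rpow_mul (by norm_num : (0:ℝ) ≤ 2), ← Real.rpow_add (by norm_num : (0:ℝ) < 2)]
    norm_num
  have h2pos : (0 : ℝ) < 2 ^ ((2 : ℝ) / 3) := Real.rpow_pos_of_pos (by norm_num) _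
  calc (2⁻¹ * (ε / 2) ^ ((1 : ℝ) / 3)) * (2⁻¹ * (ε / 2) ^ ((1 : ℝ) / 3))
      = 4⁻¹ * ((ε / 2) ^ ((1 : ℝ) / 3) * (ε / 2) ^ ((1 : ℝ) / 3)) := by ring
    _ = 4⁻¹ * (ε ^ ((2 : ℝ) / 3) / 2 ^ ((2 : ℝ) / 3)) := by rw [h13, hdiv]
    _ = (4 : ℝ) ^ (-(4 : ℝ) / 3) * ε ^ ((2 : ℝ) / 3) := by
        rw [← hkey]; field_simp

lemma key_lemma {Ω : Type*} [MeasurableSpace Ω] (P : MeasureTheory.Measure Ω)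
    [MeasureTheory.IsProbabilityMeasure P]
    (A A' B : Ω → ℝ) (hA : Measurable A) (hA' : Measurable A') (hB : Measurable B)
    (hlawA : P.map A = cuspLaw) (hlawA' : P.map A' = cuspLaw)
    (hAA' : ProbabilityTheory.IndepFun A A' P) :
    ∀ ε : ℝ, 0 < ε → ε ≤ 2 →
      (P {ω | A ω ∈ Set.Icc 0 (ε / 2)}).toReal *
          (P {ω | A' ω ∈ Set.Ico (-(ε / 2)) 0}).toReal ≤
        (∫ ω, Set.indicator {ω' | |A ω' - A' ω'| ≤ ε}
            (fun ω' => |jumpKernel (A ω') (B ω') - jumpKernel (A' ω') (B ω')|) ω ∂P) ∧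
      (P {ω | A ω ∈ Set.Icc 0 (ε / 2)}).toReal *
          (P {ω | A' ω ∈ Set.Ico (-(ε / 2)) 0}).toReal =
        (4 : ℝ) ^ (-(4 : ℝ) / 3) * ε ^ ((2 : ℝ) / 3) := by
  intro ε hε hε2
  have ha0 : (0 : ℝ) < ε / 2 := by linarith
  have ha1 : ε / 2 ≤ 1 := by linarith
  have hPA : P {ω | A ω ∈ Set.Icc 0 (ε / 2)} = cuspLaw (Set.Icc 0 (ε / 2)) := by
    rw [← hlawA, Measure.map_apply hA measurableSet_Icc]; rfl
  have hPA' : P {ω | A' ω ∈ Set.Ico (-(ε / 2)) 0} = cuspLaw (Set.Ico (-(ε / 2)) 0) := by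
    rw [← hlawA', Measure.map_apply hA' measurableSet_Ico]; rfl
  have hval : (P {ω | A ω ∈ Set.Icc 0 (ε / 2)}).toReal *
      (P {ω | A' ω ∈ Set.Ico (-(ε / 2)) 0}).toReal =
      (4 : ℝ) ^ (-(4 : ℝ) / 3) * ε ^ ((2 : ℝ) / 3) := by
    rw [hPA, hPA', cuspLaw_Icc ha0 ha1, cuspLaw_Ico ha0 ha1, cusp_product_val hε]
  refine ⟨?_, hval⟩
  -- the inequality
  set S : Set Ω := {ω' | |A ω' - A' ω'| ≤ ε} with hS
  set g : Ω → ℝ := fun ω' => |jumpKernel (A ω') (B ω') - jumpKernel (A' ω') (B ω')| with hg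
  have hSmeas : MeasurableSet S := measurableSet_le (hA.sub hA').abs measurable_const
  set E : Set Ω := {ω | A ω ∈ Set.Icc 0 (ε / 2)} ∩ {ω | A' ω ∈ Set.Ico (-(ε / 2)) 0} with hE
  have hEmeas : MeasurableSet E :=
    (hA measurableSet_Icc).inter (hA' measurableSet_Ico)
  have hgmeas : Measurable g := by
    have hj : ∀ f : Ω → ℝ, Measurable f →
        Measurable (fun ω => if (0:ℝ) ≤ f ω then (1:ℝ) else 0) := fun f hf =>
      Measurable.ite (measurableSet_le measurable_const hf) measurable_const measurable_const
    have : Measurable fun ω => jumpKernel (A ω) (B ω) - jumpKernel (A' ω) (B ω) := by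
      simp only [jumpKernel]
      exact (((hj A hA).add (hj B hB)).sub ((hj A' hA').add (hj B hB)))
    exact this.abs
  have hgbound : ∀ ω, |g ω| ≤ 1 := by
    intro ω
    simp only [hg, jumpKernel, abs_abs]
    split_ifs <;> norm_num
  have hptwise : ∀ ω, Set.indicator E (fun _ => (1 : ℝ)) ω ≤ Set.indicator S g ω := by
    intro ω
    by_cases hω : ω ∈ E
    · have hAω : A ω ∈ Set.Icc 0 (ε / 2) := hω.1
      have hA'ω : A' ω ∈ Set.Ico (-(ε / 2)) 0 := hω.2
      have hωS : ω ∈ S := by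
        simp only [hS, Set.mem_setOf_eq, abs_le]
        constructor <;> linarith [hAω.1, hAω.2, hA'ω.1, hA'ω.2]
      have hgω : g ω = 1 := by
        simp only [hg, jumpKernel, if_pos hAω.1, if_neg (not_le.mpr hA'ω.2)]
        split_ifs <;> norm_num
      rw [Set.indicator_of_mem hω, Set.indicator_of_mem hωS, hgω]
    · rw [Set.indicator_of_notMem hω]
      exact Set.indicator_nonneg (fun ω' _ => abs_nonneg _) ω
  have hint1 : MeasureTheory.Integrable (Set.indicator E (fun _ => (1 : ℝ))) P :=
    (MeasureTheory.integrable_const (1 : ℝ)).indicator hEmeas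
  have hint2 : MeasureTheory.Integrable (Set.indicator S g) P := by
    refine MeasureTheory.Integrable.mono' (MeasureTheory.integrable_const (1 : ℝ))
      (hgmeas.indicator hSmeas).aestronglyMeasurable (MeasureTheory.ae_of_all _ fun ω => ?_)
    rw [Real.norm_eq_abs]
    by_cases hω : ω ∈ S
    · rw [Set.indicator_of_mem hω]; exact hgbound ω
    · rw [Set.indicator_of_notMem hω]; norm_num
  have hmono := MeasureTheory.integral_mono hint1 hint2 hptwise
  have hleft : (∫ ω, Set.indicator E (fun _ => (1 : ℝ)) ω ∂P) = (P E).toReal := by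
    exact MeasureTheory.integral_indicator_one (μ := P) hEmeas
  have hprod : P E = P {ω | A ω ∈ Set.Icc 0 (ε / 2)} *
      P {ω | A' ω ∈ Set.Ico (-(ε / 2)) 0} :=
    hAA'.measure_inter_preimage_eq_mul _ _ measurableSet_Icc measurableSet_Ico
  calc (P {ω | A ω ∈ Set.Icc 0 (ε / 2)}).toReal *
        (P {ω | A' ω ∈ Set.Ico (-(ε / 2)) 0}).toReal
      = (P E).toReal := by rw [hprod, ENNReal.toReal_mul]
    _ = ∫ ω, Set.indicator E (fun _ => (1 : ℝ)) ω ∂P := hleft.symm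
    _ ≤ ∫ ω, Set.indicator S g ω ∂P := hmono

end Aux

/-- for the kernel `h(x,y) = 1_{x≥0} + 1_{y≥0}` and independent `X, X', Y`
with density `f(t) = (1/6)|t|^{-2/3} 1_{[-1,1]∖{0}}(t)`, the 𝒫-Lipschitz expectation is at
least `4^{-4/3} ε^{2/3}`; consequently `h` is not 𝒫-Lipschitz-continuous for an i.i.d.
sequence with this marginal density. -/
theorem jump_kernel_not_PLipschitz
    {Ω : Type*} [MeasurableSpace Ω] (P : Measure Ω) [IsProbabilityMeasure P]
    (A A' B : Ω → ℝ)
    (hA : Measurable A) (hA' : Measurable A') (hB : Measurable B)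
    (hlawA : P.map A = cuspLaw) (hlawA' : P.map A' = cuspLaw) (hlawB : P.map B = cuspLaw)
    (hindep : iIndepFun ![A, A', B] P) :
    (∀ ε : ℝ, 0 < ε → ε ≤ 2 →
        (P {ω | A ω ∈ Set.Icc 0 (ε / 2)}).toReal *
            (P {ω | A' ω ∈ Set.Ico (-(ε / 2)) 0}).toReal ≤
          (∫ ω, Set.indicator {ω' | |A ω' - A' ω'| ≤ ε}
              (fun ω' => |jumpKernel (A ω') (B ω') - jumpKernel (A' ω') (B ω')|) ω ∂P) ∧
        (P {ω | A ω ∈ Set.Icc 0 (ε / 2)}).toReal *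
            (P {ω | A' ω ∈ Set.Ico (-(ε / 2)) 0}).toReal =
          (4 : ℝ) ^ (-(4 : ℝ) / 3) * ε ^ ((2 : ℝ) / 3)) ∧
      ∀ (Ω₂ : Type) [MeasurableSpace Ω₂], ∀ (P₂ : Measure Ω₂), IsProbabilityMeasure P₂ →
        ∀ Z : ℕ → Ω₂ → ℝ, (∀ i, Measurable (Z i)) →
          (∀ i, P₂.map (Z i) = cuspLaw) →
          iIndepFun Z P₂ →
          ¬∃ L : ℝ, 0 < L ∧ PLipschitzWith P₂ Z jumpKernel L := by
  constructor
  · exact key_lemma P A A' B hA hA' hB hlawA hlawA'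
      (by simpa using hindep.indepFun (show (0 : Fin 3) ≠ 1 by decide))
  · intro Ω₂ _ P₂ hP₂ Z hZmeas hZlaw hZindep ⟨L, hL, hLip⟩
    haveI := hP₂
    have hind13 : IndepFun (Z 1) (Z 3) P₂ := hZindep.indepFun (by norm_num)
    have hind32 : IndepFun (Z 3) (Z 2) P₂ := hZindep.indepFun (by norm_num)
    have key := key_lemma P₂ (Z 1) (Z 3) (Z 2) (hZmeas 1) (hZmeas 3) (hZmeas 2)
      (hZlaw 1) (hZlaw 3) hind13
    have hadm1 : AdmissiblePairLaw P₂ Z (P₂.map fun ω => (Z 1 ω, Z 2 ω)) :=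
      Or.inl ⟨1, le_refl 1, rfl⟩
    have hadm2 : AdmissiblePairLaw P₂ Z (P₂.map fun ω => (Z 3 ω, Z 2 ω)) := by
      refine Or.inr ?_
      rw [(indepFun_iff_map_prod_eq_prod_map_map (hZmeas 3).aemeasurable
        (hZmeas 2).aemeasurable).mp hind32]
      rw [margLaw, hZlaw 1, hZlaw 3, hZlaw 2]
    have hbound : ∀ ε : ℝ, 0 < ε → ε ≤ 2 →
        (4 : ℝ) ^ (-(4 : ℝ) / 3) * ε ^ ((2 : ℝ) / 3) ≤ L * ε := by
      intro ε hε hε2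
      obtain ⟨h1, h2⟩ := key ε hε hε2
      have h3 := hLip Ω₂ P₂ (Z 1) (Z 3) (Z 2) hP₂ hadm1 hadm2 ε hε
      linarith [h2 ▸ h1]
    -- derive a contradiction by choosing ε small
    set c : ℝ := (4 : ℝ) ^ (-(4 : ℝ) / 3) with hc
    have hcpos : 0 < c := Real.rpow_pos_of_pos (by norm_num) _
    set x : ℝ := c / (2 * L) with hx
    have hxpos : 0 < x := div_pos hcpos (by linarith)
    set ε₀ : ℝ := min 1 (x ^ 3) with hε₀
    have hε₀pos : 0 < ε₀ := lt_min one_pos (pow_pos hxpos 3)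
    have hε₀le2 : ε₀ ≤ 2 := le_trans (min_le_left _ _) (by norm_num)
    have h13 : ε₀ ^ ((1 : ℝ) / 3) ≤ x := by
      have h1 : ε₀ ^ ((1 : ℝ) / 3) ≤ (x ^ 3) ^ ((1 : ℝ) / 3) :=
        Real.rpow_le_rpow hε₀pos.le (min_le_right _ _) (by norm_num)
      have h2 : (x ^ 3) ^ ((1 : ℝ) / 3) = x := by
        rw [← Real.rpow_natCast x 3, ← Real.rpow_mul hxpos.le]
        norm_num
      linarith [h2 ▸ h1]
    have hsplit : ε₀ = ε₀ ^ ((1 : ℝ) / 3) * ε₀ ^ ((2 : ℝ) / 3) := by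
      rw [← Real.rpow_add hε₀pos]; norm_num
    have h23pos : 0 < ε₀ ^ ((2 : ℝ) / 3) := Real.rpow_pos_of_pos hε₀pos _
    have hmain := hbound ε₀ hε₀pos hε₀le2
    have hLx : L * ε₀ ≤ (c / 2) * ε₀ ^ ((2 : ℝ) / 3) := by
      rw [show L * ε₀ = L * (ε₀ ^ ((1 : ℝ) / 3) * ε₀ ^ ((2 : ℝ) / 3)) by rw [← hsplit]]
      have : L * ε₀ ^ ((1 : ℝ) / 3) ≤ c / 2 := by
        have := mul_le_mul_of_nonneg_left h13 hL.le
        rw [hx] at this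
        calc L * ε₀ ^ ((1 : ℝ) / 3) ≤ L * (c / (2 * L)) := this
          _ = c / 2 := by field_simp
      calc L * (ε₀ ^ ((1 : ℝ) / 3) * ε₀ ^ ((2 : ℝ) / 3))
          = (L * ε₀ ^ ((1 : ℝ) / 3)) * ε₀ ^ ((2 : ℝ) / 3) := by ring
        _ ≤ (c / 2) * ε₀ ^ ((2 : ℝ) / 3) :=
            mul_le_mul_of_nonneg_right this h23pos.le
    have : c * ε₀ ^ ((2 : ℝ) / 3) ≤ (c / 2) * ε₀ ^ ((2 : ℝ) / 3) := le_trans hmain hLx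
    nlinarith
end

section
/- Let (X_n)_{n∈ℕ} be a strictly stationary sequence and h a symmetric measurable kernel with ∬|h(x,y)| dF(x)dF(y) < ∞ and E|h(X₁,X_{1+k})| < ∞ for all k∈ℕ₀, so that θ, h₁ and h₂ of the Hoeffding decomposition are well defined. If h is 𝒫-Lipschitz-continuous with constant L, then the degenerate kernel h₂ is 𝒫-Lipschitz-continuous with constant 2L; that is, E[|h₂(X,Y) − h₂(X',Y)| 1_{|X−X'|≤ε}] ≤ 2Lε for every ε>0 and all admissible pairs (X,Y), (X',Y). -/
open MeasureTheory ProbabilityTheory Filter Asymptotics Real Topology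

section AuxLemmas

variable {Ω : Type*} [MeasurableSpace Ω]

lemma adm_prob (P : Measure Ω) [IsProbabilityMeasure P] (X : ℕ → Ω → ℝ)
    (hXmeas : ∀ i, Measurable (X i)) {ν : Measure (ℝ × ℝ)}
    (hadm : AdmissiblePairLaw P X ν) : IsProbabilityMeasure ν := by
  haveI : IsProbabilityMeasure (margLaw P X) :=
    Measure.isProbabilityMeasure_map (hXmeas 1).aemeasurable
  rcases hadm with ⟨k, -, rfl⟩ | rfl
  · exact Measure.isProbabilityMeasure_map ((hXmeas 1).prodMk (hXmeas (1 + k))).aemeasurable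
  · infer_instance

lemma adm_aemeasurable {Ω' : Type} [MeasurableSpace Ω'] {P' : Measure Ω'}
    (P : Measure Ω) [IsProbabilityMeasure P] (X : ℕ → Ω → ℝ)
    (hXmeas : ∀ i, Measurable (X i)) {C D : Ω' → ℝ}
    (hadm : AdmissiblePairLaw P X (P'.map fun ω' => (C ω', D ω'))) :
    AEMeasurable (fun ω' => (C ω', D ω')) P' := by
  by_contra hn
  have hp := adm_prob P X hXmeas hadm
  rw [Measure.map_of_not_aemeasurable hn] at hp
  have h0 : (0 : Measure (ℝ × ℝ)) Set.univ = 1 := hp.measure_univ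
  rw [Measure.coe_zero, Pi.zero_apply] at h0
  exact one_ne_zero h0.symm

lemma adm_fst_law {Ω' : Type} [MeasurableSpace Ω'] {P' : Measure Ω'}
    (P : Measure Ω) [IsProbabilityMeasure P] (X : ℕ → Ω → ℝ)
    (hXmeas : ∀ i, Measurable (X i)) {C D : Ω' → ℝ}
    (hadm : AdmissiblePairLaw P X (P'.map fun ω' => (C ω', D ω'))) :
    P'.map C = margLaw P X := by
  haveI : IsProbabilityMeasure (margLaw P X) :=
    Measure.isProbabilityMeasure_map (hXmeas 1).aemeasurable
  have hpair := adm_aemeasurable P X hXmeas hadm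
  have h1 : P'.map C = (P'.map fun ω' => (C ω', D ω')).map Prod.fst := by
    rw [AEMeasurable.map_map_of_aemeasurable measurable_fst.aemeasurable hpair]
    rfl
  rcases hadm with ⟨k, -, hm⟩ | hm
  · rw [h1, hm, Measure.map_map measurable_fst ((hXmeas 1).prodMk (hXmeas (1 + k)))]
    rfl
  · haveI : IsProbabilityMeasure (Measure.map (X 1) P) := this
    rw [h1, hm, Measure.map_fst_prod]
    simp [margLaw]

lemma adm_integrable {Ω' : Type} [MeasurableSpace Ω'] {P' : Measure Ω'}
    (P : Measure Ω) [IsProbabilityMeasure P] (X : ℕ → Ω → ℝ)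
    (hXmeas : ∀ i, Measurable (X i)) {h : ℝ → ℝ → ℝ}
    (hmeas : Measurable fun p : ℝ × ℝ => h p.1 p.2)
    (hint : Integrable (fun p : ℝ × ℝ => h p.1 p.2) ((margLaw P X).prod (margLaw P X)))
    (hintk : ∀ k : ℕ, Integrable (fun ω => h (X 1 ω) (X (1 + k) ω)) P)
    {C D : Ω' → ℝ}
    (hadm : AdmissiblePairLaw P X (P'.map fun ω' => (C ω', D ω'))) :
    Integrable (fun ω' => h (C ω') (D ω')) P' := by
  have hpair := adm_aemeasurable P X hXmeas hadm
  have key : Integrable (fun q : ℝ × ℝ => h q.1 q.2) (P'.map fun ω' => (C ω', D ω')) := by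
    rcases hadm with ⟨k, -, hm⟩ | hm
    · rw [hm, integrable_map_measure hmeas.aestronglyMeasurable
        ((hXmeas 1).prodMk (hXmeas (1 + k))).aemeasurable]
      exact hintk k
    · rw [hm]; exact hint
  exact (integrable_map_measure hmeas.aestronglyMeasurable hpair).mp key

lemma hOne_measurable (P : Measure Ω) [IsProbabilityMeasure P] (X : ℕ → Ω → ℝ)
    (hXmeas : ∀ i, Measurable (X i)) {h : ℝ → ℝ → ℝ}
    (hmeas : Measurable fun p : ℝ × ℝ => h p.1 p.2) :
    Measurable (hOne P X h) := by
  haveI : IsProbabilityMeasure (margLaw P X) :=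
    Measure.isProbabilityMeasure_map (hXmeas 1).aemeasurable
  have hsm : StronglyMeasurable fun x => ∫ y, h x y ∂(margLaw P X) :=
    hmeas.stronglyMeasurable.integral_prod_right'
  exact hsm.measurable.sub measurable_const

end AuxLemmas

/-- if `h` is 𝒫-Lipschitz-continuous with constant `L`, then the degenerate
kernel `h₂` of the Hoeffding decomposition is 𝒫-Lipschitz-continuous with constant `2L`. -/
theorem hTwo_PLipschitz
    {Ω : Type*} [MeasurableSpace Ω] (P : Measure Ω) [IsProbabilityMeasure P]
    (X : ℕ → Ω → ℝ) (h : ℝ → ℝ → ℝ)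
    (hXmeas : ∀ i, Measurable (X i))
    (hmeas : Measurable fun p : ℝ × ℝ => h p.1 p.2)
    (hsymm : ∀ x y, h x y = h y x)
    (hstat : IsStrictlyStationary P X)
    (hint : Integrable (fun p : ℝ × ℝ => h p.1 p.2) ((margLaw P X).prod (margLaw P X)))
    (hintk : ∀ k : ℕ, Integrable (fun ω => h (X 1 ω) (X (1 + k) ω)) P)
    (L : ℝ) (hL : 0 < L) (hlip : PLipschitzWith P X h L) :
    PLipschitzWith P X (hTwo P X h) (2 * L) := by
  classical
  haveI hνP : IsProbabilityMeasure (margLaw P X) :=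
    Measure.isProbabilityMeasure_map (hXmeas 1).aemeasurable
  intro Ω' mΩ' P' A A' B hP' hAB hA'B ε hε
  haveI := hP'
  -- measurable representatives
  have hpAB : AEMeasurable (fun ω' => (A ω', B ω')) P' := adm_aemeasurable P X hXmeas hAB
  have hpA'B : AEMeasurable (fun ω' => (A' ω', B ω')) P' := adm_aemeasurable P X hXmeas hA'B
  have hAm : AEMeasurable A P' := measurable_fst.comp_aemeasurable hpAB
  have hA'm : AEMeasurable A' P' := measurable_fst.comp_aemeasurable hpA'B
  have hBm : AEMeasurable B P' := measurable_snd.comp_aemeasurable hpAB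
  set A₀ : Ω' → ℝ := hAm.mk A with hA₀def
  set A₁ : Ω' → ℝ := hA'm.mk A' with hA₁def
  set B₀ : Ω' → ℝ := hBm.mk B with hB₀def
  have eA : A =ᵐ[P'] A₀ := hAm.ae_eq_mk
  have eA' : A' =ᵐ[P'] A₁ := hA'm.ae_eq_mk
  have eB : B =ᵐ[P'] B₀ := hBm.ae_eq_mk
  have mA₀ : Measurable A₀ := hAm.measurable_mk
  have mA₁ : Measurable A₁ := hA'm.measurable_mk
  have mB₀ : Measurable B₀ := hBm.measurable_mk
  -- transfer admissibility to the representatives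
  have hmap0 : (P'.map fun ω' => (A ω', B ω')) = P'.map fun ω' => (A₀ ω', B₀ ω') := by
    apply Measure.map_congr
    filter_upwards [eA, eB] with ω' h1 h2
    rw [h1, h2]
  have hmap1 : (P'.map fun ω' => (A' ω', B ω')) = P'.map fun ω' => (A₁ ω', B₀ ω') := by
    apply Measure.map_congr
    filter_upwards [eA', eB] with ω' h1 h2
    rw [h1, h2]
  have hAB₀ : AdmissiblePairLaw P X (P'.map fun ω' => (A₀ ω', B₀ ω')) := hmap0 ▸ hAB
  have hA'B₀ : AdmissiblePairLaw P X (P'.map fun ω' => (A₁ ω', B₀ ω')) := hmap1 ▸ hA'B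
  have lawA₀ : P'.map A₀ = margLaw P X := adm_fst_law P X hXmeas hAB₀
  have lawA₁ : P'.map A₁ = margLaw P X := adm_fst_law P X hXmeas hA'B₀
  have intAB : Integrable (fun ω' => h (A₀ ω') (B₀ ω')) P' :=
    adm_integrable P X hXmeas hmeas hint hintk hAB₀
  have intA'B : Integrable (fun ω' => h (A₁ ω') (B₀ ω')) P' :=
    adm_integrable P X hXmeas hmeas hint hintk hA'B₀
  have mh1 : Measurable (hOne P X h) := hOne_measurable P X hXmeas hmeas
  -- the sets and the three indicator functions
  set S : Set Ω' := {ω' | |A₀ ω' - A₁ ω'| ≤ ε} with hSdef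
  have mS : MeasurableSet S := measurableSet_le ((mA₀.sub mA₁).abs) measurable_const
  set f : Ω' → ℝ :=
    S.indicator (fun ω' => |hTwo P X h (A₀ ω') (B₀ ω') - hTwo P X h (A₁ ω') (B₀ ω')|)
    with hfdef
  set g : Ω' → ℝ :=
    S.indicator (fun ω' => |h (A₀ ω') (B₀ ω') - h (A₁ ω') (B₀ ω')|) with hgdef
  set kf : Ω' → ℝ :=
    S.indicator (fun ω' => |hOne P X h (A₀ ω') - hOne P X h (A₁ ω')|) with hkfdef
  -- reduce the goal to the representatives
  have goal_eq :
      (fun ω' => Set.indicator {ω'' | |A ω'' - A' ω''| ≤ ε}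
        (fun ω'' => |hTwo P X h (A ω'') (B ω'') - hTwo P X h (A' ω'') (B ω'')|) ω')
        =ᵐ[P'] f := by
    filter_upwards [eA, eA', eB] with ω' h1 h2 h3
    simp only [hfdef, Set.indicator_apply, Set.mem_setOf_eq, hSdef, h1, h2, h3]
  rw [integral_congr_ae goal_eq]
  -- pointwise bound `f ≤ g + kf`
  have hfgk : ∀ ω', f ω' ≤ g ω' + kf ω' := by
    intro ω'
    by_cases hmem : ω' ∈ S
    · simp only [hfdef, hgdef, hkfdef, Set.indicator_of_mem hmem]
      have hdiff : hTwo P X h (A₀ ω') (B₀ ω') - hTwo P X h (A₁ ω') (B₀ ω')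
          = (h (A₀ ω') (B₀ ω') - h (A₁ ω') (B₀ ω'))
            - (hOne P X h (A₀ ω') - hOne P X h (A₁ ω')) := by
        simp only [hTwo]; ring
      rw [hdiff]
      exact abs_sub _ _
    · simp [hfdef, hgdef, hkfdef, Set.indicator_of_notMem hmem]
  -- measurability of the three functions
  have mg : Measurable g :=
    (((hmeas.comp (mA₀.prodMk mB₀)).sub (hmeas.comp (mA₁.prodMk mB₀))).abs).indicator mS
  have mkf : Measurable kf :=
    (((mh1.comp mA₀).sub (mh1.comp mA₁)).abs).indicator mS
  have mf : Measurable f := by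
    have m2 : Measurable fun ω' => hTwo P X h (A₀ ω') (B₀ ω') :=
      (((hmeas.comp (mA₀.prodMk mB₀)).sub (mh1.comp mA₀)).sub (mh1.comp mB₀)).sub
        measurable_const
    have m2' : Measurable fun ω' => hTwo P X h (A₁ ω') (B₀ ω') :=
      (((hmeas.comp (mA₁.prodMk mB₀)).sub (mh1.comp mA₁)).sub (mh1.comp mB₀)).sub
        measurable_const
    exact ((m2.sub m2').abs).indicator mS
  -- `∫ g ≤ L ε` by the 𝒫-Lipschitz property
  have hg_bound : ∫ ω', g ω' ∂P' ≤ L * ε := hlip Ω' P' A₀ A₁ B₀ hP' hAB₀ hA'B₀ ε hε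
  have intg : Integrable g P' := by
    refine Integrable.mono' (intAB.abs.add intA'B.abs) mg.aestronglyMeasurable ?_
    refine Eventually.of_forall fun ω' => ?_
    rw [Real.norm_eq_abs]
    by_cases hmem : ω' ∈ S
    · simp only [hgdef, Set.indicator_of_mem hmem, abs_abs]
      exact abs_sub _ _
    · simp only [hgdef, Set.indicator_of_notMem hmem, abs_zero]
      exact add_nonneg (abs_nonneg _) (abs_nonneg _)
  -- the Fubini argument for `kf`
  set ν : Measure ℝ := margLaw P X with hνdef
  set P'' : Measure (Ω' × ℝ) := P'.prod ν with hP''def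
  haveI : IsProbabilityMeasure P'' := by rw [hP''def]; infer_instance
  have hadm1 : AdmissiblePairLaw P X (P''.map fun p : Ω' × ℝ => (A₀ p.1, p.2)) := by
    refine Or.inr ?_
    have hfun : (fun p : Ω' × ℝ => (A₀ p.1, p.2)) = Prod.map A₀ id := rfl
    rw [hfun, hP''def, ← Measure.map_prod_map _ _ mA₀ measurable_id, lawA₀, Measure.map_id]
  have hadm2 : AdmissiblePairLaw P X (P''.map fun p : Ω' × ℝ => (A₁ p.1, p.2)) := by
    refine Or.inr ?_
    have hfun : (fun p : Ω' × ℝ => (A₁ p.1, p.2)) = Prod.map A₁ id := rfl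
    rw [hfun, hP''def, ← Measure.map_prod_map _ _ mA₁ measurable_id, lawA₁, Measure.map_id]
  have R1 : (∫ p, Set.indicator {q : Ω' × ℝ | |A₀ q.1 - A₁ q.1| ≤ ε}
      (fun q => |h (A₀ q.1) q.2 - h (A₁ q.1) q.2|) p ∂P'') ≤ L * ε :=
    hlip (Ω' × ℝ) P'' (fun p => A₀ p.1) (fun p => A₁ p.1) (fun p => p.2)
      inferInstance hadm1 hadm2 ε hε
  set F₂ : Ω' × ℝ → ℝ := Set.indicator {q : Ω' × ℝ | |A₀ q.1 - A₁ q.1| ≤ ε}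
      (fun q => |h (A₀ q.1) q.2 - h (A₁ q.1) q.2|) with hF₂def
  have intcomp : Integrable (fun p : Ω' × ℝ => h (A₀ p.1) p.2) P'' := by
    have hlaw : P''.map (Prod.map A₀ id) = ν.prod ν := by
      rw [hP''def, ← Measure.map_prod_map _ _ mA₀ measurable_id, lawA₀, Measure.map_id]
    have : Integrable (fun q : ℝ × ℝ => h q.1 q.2) (P''.map (Prod.map A₀ id)) := by
      rw [hlaw]; exact hint
    exact (integrable_map_measure hmeas.aestronglyMeasurable
      (mA₀.prodMap measurable_id).aemeasurable).mp this
  have intcomp' : Integrable (fun p : Ω' × ℝ => h (A₁ p.1) p.2) P'' := by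
    have hlaw : P''.map (Prod.map A₁ id) = ν.prod ν := by
      rw [hP''def, ← Measure.map_prod_map _ _ mA₁ measurable_id, lawA₁, Measure.map_id]
    have : Integrable (fun q : ℝ × ℝ => h q.1 q.2) (P''.map (Prod.map A₁ id)) := by
      rw [hlaw]; exact hint
    exact (integrable_map_measure hmeas.aestronglyMeasurable
      (mA₁.prodMap measurable_id).aemeasurable).mp this
  have mT : MeasurableSet {q : Ω' × ℝ | |A₀ q.1 - A₁ q.1| ≤ ε} :=
    measurableSet_le (((mA₀.comp measurable_fst).sub (mA₁.comp measurable_fst)).abs)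
      measurable_const
  have mF₂ : Measurable F₂ :=
    (((hmeas.comp ((mA₀.comp measurable_fst).prodMk measurable_snd)).sub
      (hmeas.comp ((mA₁.comp measurable_fst).prodMk measurable_snd))).abs).indicator mT
  have intF₂ : Integrable F₂ P'' := by
    refine Integrable.mono' (intcomp.abs.add intcomp'.abs) mF₂.aestronglyMeasurable ?_
    refine Eventually.of_forall fun p => ?_
    rw [Real.norm_eq_abs]
    by_cases hmem : p ∈ {q : Ω' × ℝ | |A₀ q.1 - A₁ q.1| ≤ ε}
    · simp only [hF₂def, Set.indicator_of_mem hmem, abs_abs]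
      exact abs_sub _ _
    · simp only [hF₂def, Set.indicator_of_notMem hmem, abs_zero]
      exact add_nonneg (abs_nonneg _) (abs_nonneg _)
  -- the inner integral of `F₂`
  set G : Ω' → ℝ := S.indicator (fun ω' => ∫ y, |h (A₀ ω') y - h (A₁ ω') y| ∂ν) with hGdef
  have inner_eq : (fun ω' => ∫ y, F₂ (ω', y) ∂ν) = G := by
    funext ω'
    by_cases hmem : ω' ∈ S
    · have hval : ∀ y, F₂ (ω', y) = |h (A₀ ω') y - h (A₁ ω') y| := fun y =>
        Set.indicator_of_mem (show ((ω', y) : Ω' × ℝ) ∈ _ from hmem) _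
      rw [hGdef, Set.indicator_of_mem hmem]
      simp only [hval]
    · have hval : ∀ y, F₂ (ω', y) = 0 := fun y =>
        Set.indicator_of_notMem (show ¬((ω', y) : Ω' × ℝ) ∈ _ from hmem) _
      rw [hGdef, Set.indicator_of_notMem hmem]
      simp only [hval, integral_zero]
  have intG : Integrable G P' := by
    have := intF₂.integral_prod_left
    rwa [show (fun x => ∫ y, F₂ (x, y) ∂ν) = G from inner_eq] at this
  have hG_bound : ∫ ω', G ω' ∂P' ≤ L * ε := by
    have hfub : ∫ p, F₂ p ∂P'' = ∫ ω', ∫ y, F₂ (ω', y) ∂ν ∂P' := by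
      rw [hP''def]; exact integral_prod F₂ (by rwa [← hP''def])
    have : ∫ ω', G ω' ∂P' = ∫ p, F₂ p ∂P'' := by
      rw [hfub, show (fun x => ∫ y, F₂ (x, y) ∂ν) = G from inner_eq]
    rw [this]; exact R1
  -- a.e. integrability of the sections
  have secae : ∀ᵐ x ∂ν, Integrable (fun y => h x y) ν := hint.prod_right_ae
  have haeA₀ : ∀ᵐ ω' ∂P', Integrable (fun y => h (A₀ ω') y) ν := by
    have h2 : ∀ᵐ x ∂(P'.map A₀), Integrable (fun y => h x y) ν := by
      rw [lawA₀]; exact secae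
    exact ae_of_ae_map mA₀.aemeasurable h2
  have haeA₁ : ∀ᵐ ω' ∂P', Integrable (fun y => h (A₁ ω') y) ν := by
    have h2 : ∀ᵐ x ∂(P'.map A₁), Integrable (fun y => h x y) ν := by
      rw [lawA₁]; exact secae
    exact ae_of_ae_map mA₁.aemeasurable h2
  -- `kf ≤ G` a.e.
  have hkG : kf ≤ᵐ[P'] G := by
    filter_upwards [haeA₀, haeA₁] with ω' hi hi'
    by_cases hmem : ω' ∈ S
    · simp only [hkfdef, hGdef, Set.indicator_of_mem hmem]
      have hone_eq : hOne P X h (A₀ ω') - hOne P X h (A₁ ω')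
          = ∫ y, (h (A₀ ω') y - h (A₁ ω') y) ∂ν := by
        rw [integral_sub hi hi']
        simp only [hOne, hνdef]
        ring
      rw [hone_eq]
      simpa [Real.norm_eq_abs] using
        norm_integral_le_integral_norm (μ := ν) (fun y => h (A₀ ω') y - h (A₁ ω') y)
    · simp only [hkfdef, hGdef, Set.indicator_of_notMem hmem, le_refl]
  have intkf : Integrable kf P' := by
    refine Integrable.mono' intG mkf.aestronglyMeasurable ?_
    filter_upwards [hkG] with ω' hle
    rw [Real.norm_eq_abs, abs_of_nonneg]
    · exact hle
    · exact Set.indicator_nonneg (fun a _ => abs_nonneg _) ω'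
  have hk_bound : ∫ ω', kf ω' ∂P' ≤ L * ε :=
    le_trans (integral_mono_ae intkf intG hkG) hG_bound
  -- put everything together
  have intf : Integrable f P' := by
    refine Integrable.mono' (intg.add intkf) mf.aestronglyMeasurable ?_
    refine Eventually.of_forall fun ω' => ?_
    rw [Real.norm_eq_abs, abs_of_nonneg (Set.indicator_nonneg (fun a _ => abs_nonneg _) ω')]
    exact hfgk ω'
  calc ∫ ω', f ω' ∂P' ≤ ∫ ω', (g ω' + kf ω') ∂P' :=
        integral_mono_ae intf (intg.add intkf) (Eventually.of_forall hfgk)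
    _ = (∫ ω', g ω' ∂P') + ∫ ω', kf ω' ∂P' := integral_add intg intkf
    _ ≤ L * ε + L * ε := add_le_add hg_bound hk_bound
    _ = 2 * L * ε := by ring
end
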